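/- Let Σ be an n×n symmetric positive-definite real matrix and X an n×p real matrix of full column rank. Then det(Σ)·det(XᴴΣ⁻¹X) = det(XᴴX)·det(N), where P := I − X(XᴴX)⁻¹Xᴴ is the orthogonal projection onto im(X)^⊥ and N := I − P + ΣP. -/

import Mathlib

open Matrix

lemma aux_inj {n p : ℕ} (X : Matrix (Fin n) (Fin p) ℝ) (hX : X.rank = p) :
    Function.Injective X.mulVec := by
  have hker : LinearMap.ker X.mulVecLin = ⊥ := by
    have h1 := X.mulVecLin.finrank_range_add_finrank_ker
    rw [Module.finrank_fintype_fun_eq_card, Fintype.card_fin] at h1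
    have h2 : Module.finrank ℝ (LinearMap.range X.mulVecLin) = p := hX
    have : Module.finrank ℝ (LinearMap.ker X.mulVecLin) = 0 := by omega
    exact Submodule.finrank_eq_zero.mp this
  have := LinearMap.ker_eq_bot.mp hker
  exact this

lemma aux_posdef {n p : ℕ} {A : Matrix (Fin n) (Fin n) ℝ} (hA : A.PosDef)
    (X : Matrix (Fin n) (Fin p) ℝ) (hXi : Function.Injective X.mulVec) :
    (Xᴴ * A * X).PosDef := by
  refine PosDef.of_dotProduct_mulVec_pos (isHermitian_conjTranspose_mul_mul X hA.1) fun x hx => ?_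
  have hXx : X *ᵥ x ≠ 0 := fun h => hx (hXi (by simpa using h))
  simpa only [star_mulVec, dotProduct_mulVec, vecMul_vecMul] using hA.dotProduct_mulVec_pos hXx

theorem stmt18 {n p : ℕ}
    (S : Matrix (Fin n) (Fin n) ℝ) (hS : S.PosDef)
    (X : Matrix (Fin n) (Fin p) ℝ) (hX : X.rank = p)
    (P : Matrix (Fin n) (Fin n) ℝ) (hP : P = 1 - X * (Xᴴ * X)⁻¹ * Xᴴ)
    (N : Matrix (Fin n) (Fin n) ℝ) (hN : N = 1 - P + S * P) :
    IsUnit N.det ∧ S.det * (Xᴴ * S⁻¹ * X).det = (Xᴴ * X).det * N.det := by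
  have hXi := aux_inj X hX
  have hG : (Xᴴ * X).PosDef := by
    have := aux_posdef Matrix.PosDef.one X hXi
    simpa using this
  have hA : (Xᴴ * S⁻¹ * X).PosDef := aux_posdef hS.inv X hXi
  have hSdet : IsUnit S.det := isUnit_iff_ne_zero.mpr hS.det_pos.ne'
  have hGdet : IsUnit (Xᴴ * X).det := isUnit_iff_ne_zero.mpr hG.det_pos.ne'
  have hAdet : IsUnit (Xᴴ * S⁻¹ * X).det := isUnit_iff_ne_zero.mpr hA.det_pos.ne'
  have hSS : S * S⁻¹ = 1 := mul_nonsing_inv S hSdet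
  have hGG : (Xᴴ * X)⁻¹ * (Xᴴ * X) = 1 := nonsing_inv_mul _ hGdet
  set Q := X * (Xᴴ * X)⁻¹ * Xᴴ with hQ
  have h1 : S * (S⁻¹ * Q - Q) = Q - S * Q := by
    rw [Matrix.mul_sub, ← Matrix.mul_assoc, hSS, Matrix.one_mul]
  have key : N = S * (1 + (S⁻¹ - 1) * Q) := by
    subst hN hP
    rw [Matrix.mul_add, Matrix.mul_one, Matrix.sub_mul, Matrix.one_mul, h1]
    noncomm_ring
  have assoc : (S⁻¹ - 1) * Q = ((S⁻¹ - 1) * X) * ((Xᴴ * X)⁻¹ * Xᴴ) := by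
    rw [hQ]; simp only [Matrix.mul_assoc]
  have e1 : Xᴴ * ((S⁻¹ - 1) * X) = Xᴴ * S⁻¹ * X - Xᴴ * X := by
    rw [Matrix.sub_mul, Matrix.one_mul, Matrix.mul_sub, Matrix.mul_assoc]
  have hdetN : N.det = S.det * ((Xᴴ * X)⁻¹ * (Xᴴ * S⁻¹ * X)).det := by
    rw [key, det_mul, assoc, det_one_add_mul_comm]
    congr 2
    rw [Matrix.mul_assoc, e1, Matrix.mul_sub, hGG]
    abel
  have hdetN' : N.det = S.det * ((Xᴴ * X).det)⁻¹ * (Xᴴ * S⁻¹ * X).det := by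
    rw [hdetN, det_mul, det_nonsing_inv, Ring.inverse_eq_inv']
    ring
  constructor
  · rw [hdetN']
    exact (hSdet.mul (isUnit_iff_ne_zero.mpr (inv_ne_zero hG.det_pos.ne'))).mul hAdet
  · rw [hdetN']
    set a := S.det
    set b := (Xᴴ * X).det
    set c := (Xᴴ * S⁻¹ * X).det
    have hb : b ≠ 0 := hG.det_pos.ne'
    field_simp
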